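/- Let F_A be a free group on a set A with |A| > 1, let κ = |F_A|, fix a ∈ A, and let S be the set of all non-identity elements g of F_A whose reduced word begins and ends with a letter from {a, a⁻¹}. Then S is κ-large, but S is neither left κ-large nor right κ-large. -/

import Mathlib

open scoped Pointwise
open Cardinal

universe u

variable {G : Type u}

/-- `A` is left `κ`-large: `G = F * A` for some `F` with `|F| < κ`. -/
def LeftLarge [Group G] (κ : Cardinal.{u}) (A : Set G) : Prop :=
  ∃ F : Set G, #F < κ ∧ F * A = Set.univ

/-- `A` is right `κ`-large: `G = A * F` for some `F` with `|F| < κ`. -/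
def RightLarge [Group G] (κ : Cardinal.{u}) (A : Set G) : Prop :=
  ∃ F : Set G, #F < κ ∧ A * F = Set.univ

/-- `A` is `κ`-large: `G = F * A * F` for some `F` with `|F| < κ`. -/
def KLarge [Group G] (κ : Cardinal.{u}) (A : Set G) : Prop :=
  ∃ F : Set G, #F < κ ∧ F * A * F = Set.univ

/-- `A` is left `κ`-thick: for every `F` with `|F| < κ` there is `a ∈ A` with `F * a ⊆ A`. -/
def LeftThick [Group G] (κ : Cardinal.{u}) (A : Set G) : Prop :=
  ∀ F : Set G, #F < κ → ∃ a ∈ A, F * {a} ⊆ A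

/-- `A` is right `κ`-thick: for every `F` with `|F| < κ` there is `a ∈ A` with `a * F ⊆ A`. -/
def RightThick [Group G] (κ : Cardinal.{u}) (A : Set G) : Prop :=
  ∀ F : Set G, #F < κ → ∃ a ∈ A, {a} * F ⊆ A

/-- `A` is `κ`-thick: for every `F` with `|F| < κ` there is `a ∈ A` with `F * a * F ⊆ A`. -/
def KThick [Group G] (κ : Cardinal.{u}) (A : Set G) : Prop :=
  ∀ F : Set G, #F < κ → ∃ a ∈ A, F * {a} * F ⊆ A

/-- `G` is `κ`-normal: every subset of size `< κ` lies in a normal subgroup of size `< κ`. -/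
def KNormal (G : Type u) [Group G] (κ : Cardinal.{u}) : Prop :=
  ∀ F : Set G, #F < κ → ∃ H : Subgroup G, H.Normal ∧ #(H : Set G) < κ ∧ F ⊆ (H : Set G)

/-- `κ` is a singular cardinal: infinite, with cofinality strictly less than `κ`. -/
def Singular (κ : Cardinal.{u}) : Prop := ℵ₀ ≤ κ ∧ κ.ord.cof < κ

/-- The set of non-identity elements of the free group whose reduced word begins and
ends with a letter from `{a, a⁻¹}`. -/
def beginsEndsWith (A : Type u) [DecidableEq A] (a : A) : Set (FreeGroup A) :=
  {g | g ≠ 1 ∧ (g.toWord.head?.map Prod.fst) = some a ∧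
    (g.toWord.getLast?.map Prod.fst) = some a}


set_option linter.unusedSectionVars false

namespace StmtTenAux

variable {α : Type u} [DecidableEq α]

/-- the "no cancellation at this pair" relation on letters -/
def RR : (α × Bool) → (α × Bool) → Prop := fun p q => ¬(p.1 = q.1 ∧ p.2 = !q.2)

lemma chain'_reduce (w : List (α × Bool)) : List.Chain' RR (FreeGroup.reduce w) := by
  induction w with
  | nil => simp [FreeGroup.reduce, List.Chain']
  | cons x t ih =>
    rw [FreeGroup.reduce.cons]
    rcases h : FreeGroup.reduce t with _ | ⟨y, s⟩
    · simp [List.Chain']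
    · rw [h] at ih
      dsimp only
      split_ifs with hc
      · exact ih.tail
      · exact List.isChain_cons_cons.mpr ⟨hc, ih⟩

lemma chain'_toWord (g : FreeGroup α) : List.Chain' RR g.toWord := by
  rw [← FreeGroup.reduce_toWord]; exact chain'_reduce _

lemma reduce_eq_self {w : List (α × Bool)} (h : List.Chain' RR w) : FreeGroup.reduce w = w := by
  induction w with
  | nil => rfl
  | cons x t ih =>
    rw [FreeGroup.reduce.cons, ih h.tail]
    cases t with
    | nil => rfl
    | cons y s =>
      dsimp only
      rw [if_neg (List.isChain_cons_cons.mp h).1]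

lemma toWord_mk' {w : List (α × Bool)} (h : List.Chain' RR w) : (FreeGroup.mk w).toWord = w := by
  rw [FreeGroup.toWord_mk, reduce_eq_self h]

lemma getLast_fst_eq (g : FreeGroup α) :
    g.toWord.getLast?.map Prod.fst = g⁻¹.toWord.head?.map Prod.fst := by
  rw [FreeGroup.toWord_inv, FreeGroup.invRev, List.head?_reverse, List.getLast?_map]
  cases g.toWord.getLast? <;> rfl

lemma mk_replicate_eq_pow (b : α) (c : Bool) (m : ℕ) :
    FreeGroup.mk (List.replicate m (b, c)) = (FreeGroup.mk [(b, c)]) ^ m := by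
  induction m with
  | zero => rw [pow_zero, FreeGroup.one_eq_mk, List.replicate_zero]
  | succ m ih =>
    rw [List.replicate_succ, pow_succ', ← ih, FreeGroup.mul_mk, List.singleton_append]

lemma inv_mk_singleton (b : α) (c : Bool) :
    (FreeGroup.mk [(b, c)])⁻¹ = FreeGroup.mk [(b, !c)] := by
  rw [FreeGroup.inv_mk]
  simp [FreeGroup.invRev]

lemma head?_dropWhile_false {β : Type u} {p : β → Bool} :
    ∀ {l : List β} {q : β}, (l.dropWhile p).head? = some q → p q = false
  | [], q => by simp
  | x :: t, q => by
    rw [List.dropWhile_cons]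
    split_ifs with h
    · exact head?_dropWhile_false
    · intro hq
      rw [List.head?_cons, Option.some_inj] at hq
      subst hq
      exact Bool.eq_false_iff.mpr h

lemma head_mk_replicate_mul (b : α) (c : Bool) (n : ℕ) (f : FreeGroup α)
    (hn : (f.toWord.takeWhile (fun p => p == (b, !c))).length < n) :
    (FreeGroup.mk (List.replicate n (b, c)) * f).toWord.head?.map Prod.fst = some b := by
  set w := f.toWord with hw
  set j := (w.takeWhile (fun p => p == (b, !c))).length with hj
  set w' := w.dropWhile (fun p => p == (b, !c)) with hw'
  have hjn : j ≤ n := le_of_lt hn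
  have hsplit : w = List.replicate j (b, !c) ++ w' := by
    conv_lhs => rw [← List.takeWhile_append_dropWhile (p := fun p => p == (b, !c)) (l := w)]
    congr 1
    rw [List.eq_replicate_iff]
    exact ⟨hj.symm, fun x hx => by simpa using List.mem_takeWhile_imp hx⟩
  have hchain_w : List.Chain' RR w := chain'_toWord f
  have hf : f = (FreeGroup.mk [(b, !c)]) ^ j * FreeGroup.mk w' := by
    rw [← FreeGroup.mk_toWord (x := f), ← hw, hsplit, ← FreeGroup.mul_mk,
      mk_replicate_eq_pow]
  have key : FreeGroup.mk (List.replicate n (b, c)) * f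
      = FreeGroup.mk (List.replicate (n - j) (b, c) ++ w') := by
    rw [hf, ← FreeGroup.mul_mk, mk_replicate_eq_pow, mk_replicate_eq_pow, ← mul_assoc]
    congr 1
    rw [← inv_mk_singleton, inv_pow, ← pow_sub_mul_pow (FreeGroup.mk [(b, c)]) hjn]
    exact mul_inv_cancel_right _ _
  have hch : List.Chain' RR (List.replicate (n - j) (b, c) ++ w') := by
    rw [List.Chain', List.isChain_append]
    refine ⟨List.isChain_replicate_of_rel _ (by simp [RR]), hchain_w.suffix ⟨_, hsplit.symm⟩, ?_⟩
    intro p hp q hq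
    have hp' : p = (b, c) := List.eq_of_mem_replicate (List.mem_of_mem_getLast? hp)
    have hq' : (q == (b, !c)) = false :=
      head?_dropWhile_false (l := w) (p := fun p => p == (b, !c)) hq
    subst hp'
    rintro ⟨h1, h2⟩
    rcases q with ⟨q1, q2⟩
    simp only at h1 h2
    subst h1
    have : q2 = !c := by rw [h2, Bool.not_not]
    subst this
    simp at hq'
  obtain ⟨k, hk⟩ : ∃ k, n - j = k + 1 := ⟨n - j - 1, by omega⟩
  rw [key, toWord_mk' hch, hk, List.replicate_succ]
  rfl

lemma mem_map_fst_inv_iff {b : α} {f : FreeGroup α} :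
    b ∈ (f⁻¹.toWord.map Prod.fst) ↔ b ∈ (f.toWord.map Prod.fst) := by
  rw [FreeGroup.toWord_inv, FreeGroup.invRev]
  simp [List.mem_map]

lemma takeWhile_nil_of_not_mem {b : α} {c : Bool} {w : List (α × Bool)}
    (h : b ∉ w.map Prod.fst) : (w.takeWhile (fun p => p == (b, c))) = [] := by
  cases w with
  | nil => rfl
  | cons x t =>
    apply List.takeWhile_cons_of_neg
    intro hx
    apply h
    have : x = (b, c) := by simpa using hx
    rw [this]
    simp

lemma exists_witness [Nontrivial α] (a : α) (F : Set (FreeGroup α))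
    (hF : #F < #(FreeGroup α)) :
    ∃ b : α, b ≠ a ∧ ∃ n : ℕ, ∀ f ∈ F, ∀ c : Bool,
      (f.toWord.takeWhile (fun p => p == (b, c))).length < n ∧
      (f⁻¹.toWord.takeWhile (fun p => p == (b, c))).length < n := by
  by_cases hfin : F.Finite
  · obtain ⟨b, hb⟩ := exists_ne a
    obtain ⟨N, hN⟩ := (hfin.image (fun f : FreeGroup α => f.toWord.length)).bddAbove
    refine ⟨b, hb, N + 1, fun f hf c => ?_⟩
    have h1 : f.toWord.length ≤ N := hN (Set.mem_image_of_mem _ hf)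
    have h2 : f⁻¹.toWord.length ≤ N := by
      rw [FreeGroup.toWord_inv, FreeGroup.invRev_length]; exact h1
    constructor
    · have := (List.takeWhile_prefix (l := f.toWord)
        (fun p => p == (b, c))).length_le
      omega
    · have := (List.takeWhile_prefix (l := f⁻¹.toWord)
        (fun p => p == (b, c))).length_le
      omega
  · haveI : Infinite ↥F := Set.infinite_coe_iff.mpr hfin
    have hinfF : ℵ₀ ≤ #F := Cardinal.aleph0_le_mk _
    haveI : Nonempty α := ⟨a⟩
    have hκ : #(FreeGroup α) = max #α ℵ₀ := Cardinal.mk_freeGroup α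
    have hmax : ℵ₀ < max #α ℵ₀ := lt_of_le_of_lt hinfF (hκ ▸ hF)
    have hα : ℵ₀ < #α := by
      rcases lt_max_iff.mp hmax with h | h
      · exact h
      · exact absurd h (lt_irrefl _)
    have hFα : #F < #α := by
      have h := hκ ▸ hF
      rwa [max_eq_left hα.le] at h
    set U : Set α := {a} ∪ ⋃ f : F, {x | x ∈ (f : FreeGroup α).toWord.map Prod.fst} with hU
    have hUcard : #U < #α := by
      refine lt_of_le_of_lt (Cardinal.mk_union_le _ _) ?_
      apply Cardinal.add_lt_of_lt hα.le
      · rw [Cardinal.mk_singleton]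
        exact lt_trans Cardinal.one_lt_aleph0 hα
      · refine lt_of_le_of_lt (Cardinal.mk_iUnion_le _) ?_
        apply Cardinal.mul_lt_of_lt hα.le hFα
        refine lt_of_le_of_lt (ciSup_le' fun f => ?_) hα
        exact le_of_lt (((f : FreeGroup α).toWord.map Prod.fst).finite_toSet.lt_aleph0)
    obtain ⟨b, hbU⟩ : ∃ b, b ∉ U := by
      by_contra h
      push_neg at h
      have : U = Set.univ := Set.eq_univ_of_forall h
      rw [this, Cardinal.mk_univ] at hUcard
      exact lt_irrefl _ hUcard
    have hba : b ≠ a := fun h => hbU (Or.inl (by simp [h]))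
    have hbf : ∀ f ∈ F, b ∉ f.toWord.map Prod.fst := by
      intro f hf hmem
      exact hbU (Or.inr (Set.mem_iUnion.mpr ⟨⟨f, hf⟩, hmem⟩))
    refine ⟨b, hba, 1, fun f hf c => ?_⟩
    constructor
    · rw [takeWhile_nil_of_not_mem (hbf f hf)]
      simp
    · rw [takeWhile_nil_of_not_mem (fun h => hbf f hf (mem_map_fst_inv_iff.mp h))]
      simp

end StmtTenAux


namespace StmtTenAux

variable {α : Type u} [DecidableEq α]

lemma of_mem_S (a : α) : FreeGroup.of a ∈ beginsEndsWith α a := by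
  refine ⟨?_, ?_, ?_⟩
  · intro h
    have := congrArg FreeGroup.toWord h
    rw [FreeGroup.toWord_of, FreeGroup.toWord_one] at this
    exact List.cons_ne_nil _ _ this
  · rw [FreeGroup.toWord_of]; rfl
  · rw [FreeGroup.toWord_of]; rfl

lemma cover (a : α) (g : FreeGroup α) :
    ∃ f1 ∈ ({1, FreeGroup.of a, (FreeGroup.of a)⁻¹} : Set (FreeGroup α)),
    ∃ s ∈ beginsEndsWith α a,
    ∃ f2 ∈ ({1, FreeGroup.of a, (FreeGroup.of a)⁻¹} : Set (FreeGroup α)),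
      f1 * s * f2 = g := by
  have h1 : (1 : FreeGroup α) ∈ ({1, FreeGroup.of a, (FreeGroup.of a)⁻¹} : Set (FreeGroup α)) :=
    Or.inl rfl
  have hinv : (FreeGroup.of a)⁻¹ ∈ ({1, FreeGroup.of a, (FreeGroup.of a)⁻¹} :
      Set (FreeGroup α)) := Or.inr (Or.inr rfl)
  rcases hw : g.toWord with _ | ⟨p, t⟩
  · -- g = 1
    have hg1 : g = 1 := FreeGroup.toWord_eq_nil_iff.mp hw
    exact ⟨(FreeGroup.of a)⁻¹, hinv, FreeGroup.of a, of_mem_S a, 1, h1, by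
      rw [hg1]; group⟩
  · have hgmk : g = FreeGroup.mk (p :: t) := by
      rw [← FreeGroup.mk_toWord (x := g), hw]
    have hchw : List.Chain' RR (p :: t) := by rw [← hw]; exact chain'_toWord g
    have hq : (p :: t).getLast? = some ((p :: t).getLast (List.cons_ne_nil _ _)) :=
      List.getLast?_eq_getLast _
    set q := (p :: t).getLast (List.cons_ne_nil _ _) with hqdef
    have hofmk : FreeGroup.of a = FreeGroup.mk [(a, true)] := rfl
    by_cases hh : p.1 = a <;> by_cases hl : q.1 = a
    · -- s = g
      refine ⟨1, h1, g, ⟨?_, ?_, ?_⟩, 1, h1, by group⟩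
      · rw [← FreeGroup.toWord_eq_nil_iff.ne, hw]; exact List.cons_ne_nil _ _
      · rw [hw, List.head?_cons, Option.map_some, hh]
      · rw [hw, hq, Option.map_some, hl]
    · -- head a, last not a :  s = g * of a
      have hch : List.Chain' RR ((p :: t) ++ [(a, true)]) := by
        rw [List.Chain', List.isChain_append]
        refine ⟨hchw, List.isChain_singleton _, ?_⟩
        intro x hx y hy
        have hxq : x = q := by rw [hq] at hx; exact Option.some_inj.mp hx.symm ▸ rfl
        have hy' : y = (a, true) := Option.some_inj.mp (by simpa using hy.symm) ▸ rfl
        subst hxq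
        rintro ⟨hc1, _⟩
        rw [hy'] at hc1
        exact hl hc1
      have hsw : (g * FreeGroup.of a).toWord = (p :: t) ++ [(a, true)] := by
        rw [hgmk, hofmk, FreeGroup.mul_mk]
        exact toWord_mk' hch
      refine ⟨1, h1, g * FreeGroup.of a, ⟨?_, ?_, ?_⟩, (FreeGroup.of a)⁻¹, hinv, by group⟩
      · rw [← FreeGroup.toWord_eq_nil_iff.ne, hsw]; simp
      · rw [hsw, List.cons_append, List.head?_cons, Option.map_some, hh]
      · rw [hsw, List.getLast?_concat]; rfl
    · -- head not a, last a : s = of a * g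
      have hch : List.Chain' RR ((a, true) :: p :: t) := by
        rw [List.Chain', List.isChain_cons_cons]
        refine ⟨?_, hchw⟩
        rintro ⟨hc1, _⟩
        exact hh hc1.symm
      have hsw : (FreeGroup.of a * g).toWord = (a, true) :: p :: t := by
        rw [hgmk, hofmk, FreeGroup.mul_mk]
        exact toWord_mk' hch
      refine ⟨(FreeGroup.of a)⁻¹, hinv, FreeGroup.of a * g, ⟨?_, ?_, ?_⟩, 1, h1, by group⟩
      · rw [← FreeGroup.toWord_eq_nil_iff.ne, hsw]; exact List.cons_ne_nil _ _
      · rw [hsw, List.head?_cons]; rfl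
      · rw [hsw, List.getLast?_cons_cons, hq, Option.map_some, hl]
    · -- neither : s = of a * g * of a
      have hch0 : List.Chain' RR ((p :: t) ++ [(a, true)]) := by
        rw [List.Chain', List.isChain_append]
        refine ⟨hchw, List.isChain_singleton _, ?_⟩
        intro x hx y hy
        have hxq : x = q := by rw [hq] at hx; exact Option.some_inj.mp hx.symm ▸ rfl
        have hy' : y = (a, true) := Option.some_inj.mp (by simpa using hy.symm) ▸ rfl
        subst hxq
        rintro ⟨hc1, _⟩
        rw [hy'] at hc1
        exact hl hc1
      have hch : List.Chain' RR ((a, true) :: ((p :: t) ++ [(a, true)])) := by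
        rw [List.cons_append, List.Chain', List.isChain_cons_cons]
        refine ⟨?_, by rw [← List.cons_append]; exact hch0⟩
        rintro ⟨hc1, _⟩
        exact hh hc1.symm
      have hsw : (FreeGroup.of a * g * FreeGroup.of a).toWord
          = (a, true) :: ((p :: t) ++ [(a, true)]) := by
        rw [hgmk, hofmk, FreeGroup.mul_mk, FreeGroup.mul_mk]
        exact toWord_mk' hch
      refine ⟨(FreeGroup.of a)⁻¹, hinv, FreeGroup.of a * g * FreeGroup.of a,
        ⟨?_, ?_, ?_⟩, (FreeGroup.of a)⁻¹, hinv, by group⟩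
      · rw [← FreeGroup.toWord_eq_nil_iff.ne, hsw]; exact List.cons_ne_nil _ _
      · rw [hsw, List.head?_cons]; rfl
      · rw [hsw]
        have : ((a, true) :: ((p :: t) ++ [(a, true)])).getLast? = some (a, true) := by
          rw [← List.cons_append, List.getLast?_concat]
        rw [this]; rfl

end StmtTenAux

/-- For a free group `F_A` with `|A| > 1` and `a ∈ A`, the set `S`
of reduced words beginning and ending with a letter from `{a, a⁻¹}` is `κ`-large but
neither left nor right `κ`-large, where `κ = |F_A|`. -/
theorem beginsEndsWith_kLarge_not_oneSided (A : Type u) [DecidableEq A]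
    (hA : 1 < #A) (a : A) :
    KLarge (#(FreeGroup A)) (beginsEndsWith A a) ∧
    ¬ LeftLarge (#(FreeGroup A)) (beginsEndsWith A a) ∧
    ¬ RightLarge (#(FreeGroup A)) (beginsEndsWith A a) := by
  classical
  haveI hnt : Nontrivial A := Cardinal.one_lt_iff_nontrivial.mp hA
  haveI hne : Nonempty A := ⟨a⟩
  have hκinf : ℵ₀ ≤ #(FreeGroup A) := Cardinal.aleph0_le_mk _
  refine ⟨?_, ?_, ?_⟩
  · -- KLarge
    refine ⟨{1, FreeGroup.of a, (FreeGroup.of a)⁻¹}, ?_, ?_⟩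
    · exact lt_of_lt_of_le
        ((Set.finite_singleton _).insert _ |>.insert _).lt_aleph0 hκinf
    · rw [Set.eq_univ_iff_forall]
      intro g
      obtain ⟨f1, hf1, s, hs, f2, hf2, heq⟩ := StmtTenAux.cover a g
      rw [← heq]
      exact Set.mul_mem_mul (Set.mul_mem_mul hf1 hs) hf2
  · -- not LeftLarge
    rintro ⟨F, hF, hFS⟩
    obtain ⟨b, hb, n, hn⟩ := StmtTenAux.exists_witness a F hF
    set g : FreeGroup A := FreeGroup.mk (List.replicate n (b, true)) with hg
    have hmem : g ∈ F * beginsEndsWith A a := hFS ▸ Set.mem_univ g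
    obtain ⟨f, hf, s, hs, hfs⟩ := Set.mem_mul.mp hmem
    have h3 := hs.2.2
    rw [StmtTenAux.getLast_fst_eq] at h3
    have hsinv : s⁻¹ = FreeGroup.mk (List.replicate n (b, false)) * f := by
      have hsval : s = f⁻¹ * g := by rw [← hfs]; group
      have hginv : g⁻¹ = FreeGroup.mk (List.replicate n (b, false)) := by
        rw [hg, FreeGroup.inv_mk]
        congr 1
        simp [FreeGroup.invRev]
      rw [hsval, mul_inv_rev, inv_inv, hginv]
    rw [hsinv, StmtTenAux.head_mk_replicate_mul b false n f
      (by simpa using (hn f hf true).1)] at h3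
    exact hb (Option.some_inj.mp h3)
  · -- not RightLarge
    rintro ⟨F, hF, hFS⟩
    obtain ⟨b, hb, n, hn⟩ := StmtTenAux.exists_witness a F hF
    set g : FreeGroup A := FreeGroup.mk (List.replicate n (b, true)) with hg
    have hmem : g ∈ beginsEndsWith A a * F := hFS ▸ Set.mem_univ g
    obtain ⟨s, hs, f, hf, hfs⟩ := Set.mem_mul.mp hmem
    have h2 := hs.2.1
    have hsval : s = FreeGroup.mk (List.replicate n (b, true)) * f⁻¹ := by
      rw [← hg, ← hfs]; group
    rw [hsval, StmtTenAux.head_mk_replicate_mul b true n f⁻¹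
      (by simpa using (hn f hf false).2)] at h2
    exact hb (Option.some_inj.mp h2)
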